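/- Let z ∈ ℂ \ {0}, let C : ℤ → Matrix (Fin 2) (Fin 2) ℂ be a family of 2×2 complex matrices with C(x)₁₁ ≠ 0 for all x, and let φ : ℤ → ℂ². Then the following are equivalent: (i) for every x ∈ ℤ, (C(x+1)·φ(x+1))₁ = z·φ(x)₁ and (C(x−1)·φ(x−1))₂ = z·φ(x)₂ (i.e., φ solves the pointwise eigenvalue equation (Ũ − z)φ = 0 for the coined walk Ũ = SC); (ii) for every x ∈ ℤ, the vector (φ(x)₁, φ(x+1)₂) equals 𝒯_z(C(x)) applied to the vector (φ(x−1)₁, φ(x)₂). -/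

import Mathlib

open Matrix

/-- The transfer matrix `𝒯_z(C) = C₁₁⁻¹ [[z, -C₁₂],[C₂₁, z⁻¹ det C]]`. -/
noncomputable def transferMatrix (z : ℂ) (C : Matrix (Fin 2) (Fin 2) ℂ) :
    Matrix (Fin 2) (Fin 2) ℂ :=
  (C 0 0)⁻¹ • !![z, -C 0 1; C 1 0, z⁻¹ * C.det]

/-- `φ` solves the pointwise eigenvalue equation `(Ũ - z)φ = 0` for the coined walk
`Ũ = SC` if and only if the transfer matrix relation
`(φ(x)₁, φ(x+1)₂) = 𝒯_z(C(x)) (φ(x-1)₁, φ(x)₂)` holds for all `x`. -/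
theorem stmt19 (z : ℂ) (hz : z ≠ 0) (C : ℤ → Matrix (Fin 2) (Fin 2) ℂ)
    (hC : ∀ x, C x 0 0 ≠ 0) (φ : ℤ → Fin 2 → ℂ) :
    (∀ x : ℤ, ((C (x + 1)).mulVec (φ (x + 1))) 0 = z * φ x 0
        ∧ ((C (x - 1)).mulVec (φ (x - 1))) 1 = z * φ x 1)
      ↔ (∀ x : ℤ, ![φ x 0, φ (x + 1) 1]
          = (transferMatrix z (C x)).mulVec ![φ (x - 1) 0, φ x 1]) := by
  constructor
  · intro h x
    have h1 := (h (x - 1)).1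
    have h2 := (h (x + 1)).2
    rw [show x - 1 + 1 = x by ring] at h1
    rw [show x + 1 - 1 = x by ring] at h2
    simp only [Matrix.mulVec, dotProduct, Fin.sum_univ_two] at h1 h2
    funext i
    fin_cases i
    · simp only [transferMatrix, Matrix.mulVec, dotProduct, Fin.sum_univ_two,
        Matrix.smul_apply, Matrix.cons_val_zero, Matrix.cons_val_one, Matrix.head_cons,
        Matrix.of_apply, Matrix.cons_val', Matrix.empty_val',
        Matrix.cons_val_fin_one, smul_eq_mul, Matrix.det_fin_two, Fin.zero_eta, Fin.mk_one]
      field_simp [hC x, hz]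
      linear_combination h1
    · simp only [transferMatrix, Matrix.mulVec, dotProduct, Fin.sum_univ_two,
        Matrix.smul_apply, Matrix.cons_val_zero, Matrix.cons_val_one, Matrix.head_cons,
        Matrix.of_apply, Matrix.cons_val', Matrix.empty_val',
        Matrix.cons_val_fin_one, smul_eq_mul, Matrix.det_fin_two, Fin.zero_eta, Fin.mk_one]
      field_simp [hC x, hz]
      linear_combination C x 1 0 * h1 - C x 0 0 * h2
  · intro h x
    constructor
    · have h1 := congrFun (h (x + 1)) 0
      rw [show x + 1 - 1 = x by ring] at h1
      simp only [transferMatrix, Matrix.mulVec, dotProduct, Fin.sum_univ_two,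
        Matrix.smul_apply, Matrix.cons_val_zero, Matrix.cons_val_one, Matrix.head_cons,
        Matrix.of_apply, Matrix.cons_val', Matrix.empty_val',
        Matrix.cons_val_fin_one, smul_eq_mul] at h1 ⊢
      field_simp [hC (x + 1), hz] at h1
      linear_combination h1
    · have h1 := congrFun (h (x - 1)) 0
      have h2 := congrFun (h (x - 1)) 1
      rw [show x - 1 + 1 = x by ring] at h2
      simp only [transferMatrix, Matrix.mulVec, dotProduct, Fin.sum_univ_two,
        Matrix.smul_apply, Matrix.cons_val_zero, Matrix.cons_val_one, Matrix.head_cons,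
        Matrix.of_apply, Matrix.cons_val', Matrix.empty_val',
        Matrix.cons_val_fin_one, smul_eq_mul, Matrix.det_fin_two] at h1 h2 ⊢
      field_simp [hC (x - 1), hz] at h1 h2
      have key : (C (x - 1) 0 0 * C (x - 1) 0 0 * z)
            * (C (x - 1) 1 0 * φ (x - 1) 0 + C (x - 1) 1 1 * φ (x - 1) 1)
          = (C (x - 1) 0 0 * C (x - 1) 0 0 * z) * (z * φ x 1) := by
        linear_combination (C (x - 1) 0 0 * z * C (x - 1) 1 0) * h1 - (C (x - 1) 0 0 * z) * h2
      exact mul_left_cancel₀ (mul_ne_zero (mul_ne_zero (hC _) (hC _)) hz) key
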